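/- arXiv:2409.07666 — 4 statements merged into one kernel-verified Lean document; each statement's English description precedes it below -/
import Mathlib

section
/- (Lemma 5) Under Assumption 1, every element of 𝒦̂_𝒮 is a stabilizing distributed gain: if Z̃ and Q̃ are clique-block-diagonal with Q̃ ≻ 0 and there exists ρ ∈ ℝ with Φ(Q̃,Z̃) + ρ blkdiag(Q̃,Q̃) M blkdiag(Q̃,Q̃) ≻ 0, then K = (EᵀE)⁻¹Eᵀ Z̃ Q̃⁻¹ E satisfies K ∈ 𝒮 and the matrix P = EᵀQ̃⁻¹E satisfies P ∈ 𝒮, P ≻ 0, and (A+BK)ᵀP(A+BK) − P ≺ 0. -/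
open Matrix

/-- Block index set: `Idx dims` indexes the rows/columns of an `n × n` matrix
partitioned into blocks of sizes `dims 0, …, dims (N-1)`. -/
abbrev Idx {N : ℕ} (dims : Fin N → ℕ) : Type := Σ i : Fin N, Fin (dims i)

/-- The sparsity set `𝒮`: the `(i,j)` block vanishes whenever `i ≠ j` and `(i,j) ∉ ℰ`. -/
def Sparse {N : ℕ} (Gr : SimpleGraph (Fin N)) (dims : Fin N → ℕ)
    (K : Matrix (Idx dims) (Idx dims) ℝ) : Prop :=
  ∀ i j : Fin N, i ≠ j → ¬ Gr.Adj i j →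
    ∀ (a : Fin (dims i)) (b : Fin (dims j)), K ⟨i, a⟩ ⟨j, b⟩ = 0

/-- Block-diagonal (w.r.t. the partition `dims`): off-diagonal blocks vanish. -/
def BlkDiag {N : ℕ} (dims : Fin N → ℕ) (K : Matrix (Idx dims) (Idx dims) ℝ) : Prop :=
  ∀ p r : Idx dims, p.1 ≠ r.1 → K p r = 0

/-- `X ≺ 0`: negative definiteness. -/
def NegDef {m : Type*} [Fintype m] (X : Matrix m m ℝ) : Prop := (-X).PosDef

/-- Row index set of the stacked clique selector matrix `E`. -/
abbrev CIdx {N q : ℕ} (dims : Fin N → ℕ) (C : Fin q → Finset (Fin N)) : Type :=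
  Σ k : Fin q, Σ j : {x : Fin N // x ∈ C k}, Fin (dims j.1)

/-- The stacked selector matrix `E = [E_{C_1}ᵀ, …, E_{C_q}ᵀ]ᵀ`. -/
def Emat {N q : ℕ} (dims : Fin N → ℕ) (C : Fin q → Finset (Fin N)) :
    Matrix (CIdx dims C) (Idx dims) ℝ :=
  fun p i => if (⟨p.2.1.1, p.2.2⟩ : Idx dims) = i then 1 else 0

/-- Clique-block-diagonal matrices `blkdiag(X_1, …, X_q)` with `X_k ∈ ℝ^{n_{C_k} × n_{C_k}}`. -/
def CliqueBlkDiag {N q : ℕ} (dims : Fin N → ℕ) (C : Fin q → Finset (Fin N))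
    (X : Matrix (CIdx dims C) (CIdx dims C) ℝ) : Prop :=
  ∀ p r : CIdx dims C, p.1 ≠ r.1 → X p r = 0

/-- `C_1, …, C_q` are cliques of the graph. -/
def IsCliques {N q : ℕ} (Gr : SimpleGraph (Fin N)) (C : Fin q → Finset (Fin N)) : Prop :=
  ∀ k : Fin q, ∀ i ∈ C k, ∀ j ∈ C k, i ≠ j → Gr.Adj i j

/-- Assumption 1: every node is covered, and two distinct nodes share a clique iff adjacent. -/
def Assumption1 {N q : ℕ} (Gr : SimpleGraph (Fin N)) (C : Fin q → Finset (Fin N)) : Prop :=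
  (∀ i : Fin N, ∃ k, i ∈ C k) ∧
    ∀ i j : Fin N, i ≠ j → ((∃ k, i ∈ C k ∧ j ∈ C k) ↔ Gr.Adj i j)

/-- `N₀ = I − E (EᵀE)⁻¹ Eᵀ`. -/
noncomputable def N0 {N q : ℕ} (dims : Fin N → ℕ) (C : Fin q → Finset (Fin N)) :
    Matrix (CIdx dims C) (CIdx dims C) ℝ :=
  1 - Emat dims C * ((Emat dims C)ᵀ * Emat dims C)⁻¹ * (Emat dims C)ᵀ

/-- `M = blkdiag(N₀, N₀)`. -/
noncomputable def Mmat {N q : ℕ} (dims : Fin N → ℕ) (C : Fin q → Finset (Fin N)) :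
    Matrix (CIdx dims C ⊕ CIdx dims C) (CIdx dims C ⊕ CIdx dims C) ℝ :=
  fromBlocks (N0 dims C) 0 0 (N0 dims C)

/-- Dilation `X̃ = E X (EᵀE)⁻¹ Eᵀ`. -/
noncomputable def tilde {N q : ℕ} (dims : Fin N → ℕ) (C : Fin q → Finset (Fin N))
    (X : Matrix (Idx dims) (Idx dims) ℝ) : Matrix (CIdx dims C) (CIdx dims C) ℝ :=
  Emat dims C * X * ((Emat dims C)ᵀ * Emat dims C)⁻¹ * (Emat dims C)ᵀ

/-- The gain `(EᵀE)⁻¹ Eᵀ Z̃ G̃⁻¹ E`. -/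
noncomputable def gainCl {N q : ℕ} (dims : Fin N → ℕ) (C : Fin q → Finset (Fin N))
    (Zt Gt : Matrix (CIdx dims C) (CIdx dims C) ℝ) : Matrix (Idx dims) (Idx dims) ℝ :=
  ((Emat dims C)ᵀ * Emat dims C)⁻¹ * (Emat dims C)ᵀ * Zt * Gt⁻¹ * Emat dims C

/-- `Φ(Q̃, Z̃) = [[Q̃, (ÃQ̃+B̃Z̃)ᵀ], [ÃQ̃+B̃Z̃, Q̃]]`. -/
noncomputable def Phi {N q : ℕ} (dims : Fin N → ℕ) (C : Fin q → Finset (Fin N))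
    (A B : Matrix (Idx dims) (Idx dims) ℝ)
    (Qt Zt : Matrix (CIdx dims C) (CIdx dims C) ℝ) :
    Matrix (CIdx dims C ⊕ CIdx dims C) (CIdx dims C ⊕ CIdx dims C) ℝ :=
  fromBlocks Qt (tilde dims C A * Qt + tilde dims C B * Zt)ᵀ
    (tilde dims C A * Qt + tilde dims C B * Zt) Qt


lemma myOffblockMul {ι κ : Type*} [Fintype ι] {f : ι → κ} {X Y : Matrix ι ι ℝ}
    (hX : ∀ p r, f p ≠ f r → X p r = 0) (hY : ∀ p r, f p ≠ f r → Y p r = 0) :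
    ∀ p r, f p ≠ f r → (X * Y) p r = 0 := by
  intro p r h
  rw [Matrix.mul_apply]
  refine Finset.sum_eq_zero fun c _ => ?_
  by_cases hc : f p = f c
  · rw [hY c r (fun hcr => h (hc.trans hcr)), mul_zero]
  · rw [hX p c hc, zero_mul]

lemma myOffblockInv {ι κ : Type*} [Fintype ι] [DecidableEq ι] (f : ι → κ)
    (X : Matrix ι ι ℝ) (hdet : IsUnit X.det)
    (hX : ∀ p r, f p ≠ f r → X p r = 0) :
    ∀ p r, f p ≠ f r → X⁻¹ p r = 0 := by
  classical
  let S : Submodule ℝ (Matrix ι ι ℝ) :=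
    { carrier := {Y | ∀ p r, f p ≠ f r → Y p r = 0}
      add_mem' := fun {a b} ha hb p r hpr => by
        simp only [Matrix.add_apply, ha p r hpr, hb p r hpr, add_zero]
      zero_mem' := fun p r _ => rfl
      smul_mem' := fun c {Y} hY p r hpr => by
        simp only [Matrix.smul_apply, hY p r hpr, smul_zero] }
  haveI := X.invertibleOfIsUnitDet hdet
  let L : S →ₗ[ℝ] S :=
    { toFun := fun Y => ⟨X * Y.1, myOffblockMul hX Y.2⟩
      map_add' := fun a b => Subtype.ext (Matrix.mul_add _ _ _)
      map_smul' := fun c a => Subtype.ext (Matrix.mul_smul _ _ _) }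
  have hinj : Function.Injective L := by
    intro a b hab
    have h1 : X * a.1 = X * b.1 := congrArg Subtype.val hab
    refine Subtype.ext ?_
    have := congrArg (fun Z => X⁻¹ * Z) h1
    simpa only [Matrix.inv_mul_cancel_left_of_invertible] using this
  obtain ⟨Y, hY⟩ := LinearMap.injective_iff_surjective.mp hinj
    ⟨(1 : Matrix ι ι ℝ), fun p r hpr =>
      Matrix.one_apply_ne (fun he => hpr (congrArg f he))⟩
  have hXY : X * Y.1 = 1 := congrArg Subtype.val hY
  rw [Matrix.inv_eq_right_inv hXY]
  exact Y.2

lemma myCTeq {a b : Type*} (M : Matrix a b ℝ) : Mᴴ = Mᵀ :=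
  Matrix.conjTranspose_eq_transpose_of_trivial M

lemma myPosDefConj {m n : Type*} [Fintype m] [Fintype n] {X : Matrix m m ℝ} (hX : X.PosDef)
    (T : Matrix m n ℝ) (hT : ∀ v, T *ᵥ v = 0 → v = 0) : (Tᵀ * X * T).PosDef := by
  rw [Matrix.posDef_iff_dotProduct_mulVec]
  constructor
  · have := Matrix.isHermitian_conjTranspose_mul_mul T hX.1
    rwa [myCTeq] at this
  · intro x hx
    have hTx : T *ᵥ x ≠ 0 := fun h0 => hx (hT x h0)
    have hpos := hX.dotProduct_mulVec_pos hTx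
    have hst : ∀ (v : m → ℝ), star v = v := fun v => funext fun i => star_trivial _
    have hst' : ∀ (v : n → ℝ), star v = v := fun v => funext fun i => star_trivial _
    calc (0:ℝ) < star (T *ᵥ x) ⬝ᵥ X *ᵥ (T *ᵥ x) := hpos
    _ = star x ⬝ᵥ (Tᵀ * X * T) *ᵥ x := by
        rw [hst, hst', ← Matrix.mulVec_mulVec, ← Matrix.mulVec_mulVec,
          Matrix.dotProduct_mulVec x, Matrix.vecMul_transpose]

lemma mySchur22 {m n : Type*} [Fintype m] [Fintype n] [DecidableEq m] [DecidableEq n]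
    (A : Matrix m m ℝ) (B : Matrix m n ℝ) (D : Matrix n n ℝ) (hD : D.PosDef)
    (h : (fromBlocks A B Bᵀ D).PosDef) : (A - B * D⁻¹ * Bᵀ).PosDef := by
  rw [← myCTeq] at h ⊢
  haveI := D.invertibleOfIsUnitDet hD.det_pos.ne'.isUnit
  rw [Matrix.posDef_iff_dotProduct_mulVec]
  constructor
  · exact (Matrix.IsHermitian.fromBlocks₂₂ A B hD.1).mp h.1
  · intro x hx
    have hne : (Sum.elim x (-((D⁻¹ * Bᴴ) *ᵥ x)) : m ⊕ n → ℝ) ≠ 0 := by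
      intro h0
      exact hx (funext fun i => congrFun h0 (Sum.inl i))
    have h2 := h.dotProduct_mulVec_pos hne
    rw [Matrix.dotProduct_mulVec, Matrix.schur_complement_eq₂₂ A B x _ hD.1] at h2
    simp only [add_neg_cancel, star_zero, Matrix.zero_vecMul, zero_dotProduct,
      zero_add] at h2
    rwa [Matrix.dotProduct_mulVec]

section Elem
variable {N q : ℕ} {dims : Fin N → ℕ} {C : Fin q → Finset (Fin N)}

lemma myEmatInj (hcov : ∀ i : Fin N, ∃ k, i ∈ C k) :
    ∀ v : Idx dims → ℝ, Emat dims C *ᵥ v = 0 → v = 0 := by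
  intro v hv
  funext p
  obtain ⟨i, a⟩ := p
  obtain ⟨k, hk⟩ := hcov i
  have := congrFun hv ⟨k, ⟨⟨i, hk⟩, a⟩⟩
  simpa [Matrix.mulVec, dotProduct, Emat, ite_mul] using this

lemma myEtEoff : ∀ p r : Idx dims, p ≠ r →
    ((Emat dims C)ᵀ * Emat dims C) p r = 0 := by
  intro p r hpr
  rw [Matrix.mul_apply]
  refine Finset.sum_eq_zero fun c _ => ?_
  rw [Matrix.transpose_apply]
  by_cases h1 : (⟨c.2.1.1, c.2.2⟩ : Idx dims) = p
  · have h2 : (⟨c.2.1.1, c.2.2⟩ : Idx dims) ≠ r := fun h2 => hpr (h1.symm.trans h2)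
    simp [Emat, h1, h2, hpr]
  · simp [Emat, h1]

lemma myEtEposdef (hcov : ∀ i : Fin N, ∃ k, i ∈ C k) :
    ((Emat dims C)ᵀ * Emat dims C).PosDef := by
  have := myPosDefConj (Matrix.PosDef.one (n := CIdx dims C) (R := ℝ))
    (Emat dims C) (myEmatInj hcov)
  rwa [Matrix.mul_one] at this

lemma mySparseMid {Gr : SimpleGraph (Fin N)} (hass : Assumption1 Gr C)
    (W : Matrix (CIdx dims C) (CIdx dims C) ℝ) (hW : CliqueBlkDiag dims C W) :
    Sparse Gr dims ((Emat dims C)ᵀ * W * Emat dims C) := by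
  intro i j hij hadj a b
  rw [Matrix.mul_apply]
  refine Finset.sum_eq_zero fun c' _ => ?_
  by_cases hc' : (⟨c'.2.1.1, c'.2.2⟩ : Idx dims) = (⟨j, b⟩ : Idx dims)
  · have hj : j ∈ C c'.1 := by
      have h1 : c'.2.1.1 = j := congrArg Sigma.fst hc'
      rw [← h1]; exact c'.2.1.2
    have hz : ((Emat dims C)ᵀ * W) ⟨i,a⟩ c' = 0 := by
      rw [Matrix.mul_apply]
      refine Finset.sum_eq_zero fun c _ => ?_
      rw [Matrix.transpose_apply]
      by_cases hc : (⟨c.2.1.1, c.2.2⟩ : Idx dims) = (⟨i, a⟩ : Idx dims)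
      · have hi : i ∈ C c.1 := by
          have h1 : c.2.1.1 = i := congrArg Sigma.fst hc
          rw [← h1]; exact c.2.1.2
        have hkk : c.1 ≠ c'.1 := by
          intro hkk
          exact hadj ((hass.2 i j hij).mp ⟨c.1, hi, by rw [hkk]; exact hj⟩)
        rw [hW c c' hkk, mul_zero]
      · simp [Emat, hc]
    rw [hz, zero_mul]
  · have : Emat dims C c' (⟨j, b⟩ : Idx dims) = 0 := by simp [Emat, hc']
    rw [this, mul_zero]

end Elem

section Blocks
variable {N q : ℕ} {dims : Fin N → ℕ} {C : Fin q → Finset (Fin N)}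
  {A B : Matrix (Idx dims) (Idx dims) ℝ} {Zt Qt : Matrix (CIdx dims C) (CIdx dims C) ℝ}

lemma myBlockLow
    (h1 : Qt * Qt⁻¹ = 1)
    (h3 : ((Emat dims C)ᵀ * Emat dims C)⁻¹ * ((Emat dims C)ᵀ * Emat dims C) = 1)
    (h6 : (Qt⁻¹)ᵀ = Qt⁻¹) :
    (Qt⁻¹ * Emat dims C)ᵀ *
      ((tilde dims C A * Qt + tilde dims C B * Zt) * (Qt⁻¹ * Emat dims C)) =
    ((Emat dims C)ᵀ * Qt⁻¹ * Emat dims C) * (A + B * gainCl dims C Zt Qt) := by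
  have cQ : ∀ Z : Matrix (CIdx dims C) (Idx dims) ℝ, Qt * (Qt⁻¹ * Z) = Z := fun Z => by
    rw [← Matrix.mul_assoc, h1, Matrix.one_mul]
  unfold tilde gainCl
  simp only [Matrix.transpose_mul, h6, Matrix.add_mul, Matrix.mul_add, Matrix.mul_assoc,
    cQ, h3, Matrix.mul_one, Matrix.one_mul]

lemma myBlockUp
    (h2 : Qt⁻¹ * Qt = 1)
    (h4 : ((Emat dims C)ᵀ * Emat dims C) * ((Emat dims C)ᵀ * Emat dims C)⁻¹ = 1)
    (h5 : Qtᵀ = Qt) (h6 : (Qt⁻¹)ᵀ = Qt⁻¹)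
    (h7 : (((Emat dims C)ᵀ * Emat dims C)⁻¹)ᵀ = ((Emat dims C)ᵀ * Emat dims C)⁻¹) :
    (Qt⁻¹ * Emat dims C)ᵀ *
      ((tilde dims C A * Qt + tilde dims C B * Zt)ᵀ * (Qt⁻¹ * Emat dims C)) =
    (((Emat dims C)ᵀ * Qt⁻¹ * Emat dims C) * (A + B * gainCl dims C Zt Qt))ᵀ := by
  have cQi : ∀ Z : Matrix (CIdx dims C) (Idx dims) ℝ, Qt⁻¹ * (Qt * Z) = Z := fun Z => by
    rw [← Matrix.mul_assoc, h2, Matrix.one_mul]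
  have cEE : ∀ Z : Matrix (Idx dims) (Idx dims) ℝ,
      (Emat dims C)ᵀ * (Emat dims C * (((Emat dims C)ᵀ * Emat dims C)⁻¹ * Z)) = Z := fun Z => by
    rw [← Matrix.mul_assoc, ← Matrix.mul_assoc, h4, Matrix.one_mul]
  unfold tilde gainCl
  simp only [Matrix.transpose_mul, Matrix.transpose_add, Matrix.transpose_transpose,
    h5, h6, h7, Matrix.add_mul, Matrix.mul_add, Matrix.mul_assoc, cQi, cEE,
    Matrix.mul_one, Matrix.one_mul]

end Blocks

/-- Lemma 5: every element of `𝒦̂_𝒮` is a stabilizing distributed gain. -/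
theorem stmt8 {N q : ℕ} (Gr : SimpleGraph (Fin N)) (dims : Fin N → ℕ)
    (C : Fin q → Finset (Fin N)) (hclq : IsCliques Gr C) (hass : Assumption1 Gr C)
    (A B : Matrix (Idx dims) (Idx dims) ℝ)
    (Zt Qt : Matrix (CIdx dims C) (CIdx dims C) ℝ)
    (hZt : CliqueBlkDiag dims C Zt) (hQt : CliqueBlkDiag dims C Qt) (hQpd : Qt.PosDef)
    (ρ : ℝ)
    (h : (Phi dims C A B Qt Zt +
        ρ • ((fromBlocks Qt 0 0 Qt) * Mmat dims C * (fromBlocks Qt 0 0 Qt))).PosDef) :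
    Sparse Gr dims (gainCl dims C Zt Qt) ∧
    Sparse Gr dims ((Emat dims C)ᵀ * Qt⁻¹ * Emat dims C) ∧
    ((Emat dims C)ᵀ * Qt⁻¹ * Emat dims C).PosDef ∧
    NegDef ((A + B * gainCl dims C Zt Qt)ᵀ * ((Emat dims C)ᵀ * Qt⁻¹ * Emat dims C) *
      (A + B * gainCl dims C Zt Qt) - (Emat dims C)ᵀ * Qt⁻¹ * Emat dims C) := by
  classical
  have hEinj := myEmatInj (dims := dims) (C := C) hass.1
  have hEEpd := myEtEposdef (dims := dims) (C := C) hass.1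
  have hEEdet : IsUnit ((Emat dims C)ᵀ * Emat dims C).det := hEEpd.det_pos.ne'.isUnit
  have hQdet : IsUnit Qt.det := hQpd.det_pos.ne'.isUnit
  have hQQi : Qt * Qt⁻¹ = 1 := Matrix.mul_nonsing_inv _ hQdet
  have hQiQ : Qt⁻¹ * Qt = 1 := Matrix.nonsing_inv_mul _ hQdet
  have hEEc : ((Emat dims C)ᵀ * Emat dims C) * ((Emat dims C)ᵀ * Emat dims C)⁻¹ = 1 :=
    Matrix.mul_nonsing_inv _ hEEdet
  have hEEc' : ((Emat dims C)ᵀ * Emat dims C)⁻¹ * ((Emat dims C)ᵀ * Emat dims C) = 1 :=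
    Matrix.nonsing_inv_mul _ hEEdet
  have hQtr : Qtᵀ = Qt := by rw [← myCTeq]; exact hQpd.1
  have hQitr : (Qt⁻¹)ᵀ = Qt⁻¹ := by rw [← myCTeq]; exact hQpd.1.inv
  have hEitr : ((((Emat dims C)ᵀ * Emat dims C))⁻¹)ᵀ = (((Emat dims C)ᵀ * Emat dims C))⁻¹ := by
    rw [← myCTeq]; exact hEEpd.1.inv
  -- sparsity facts
  have hQiblk : CliqueBlkDiag dims C Qt⁻¹ :=
    fun p r hpr => myOffblockInv Sigma.fst Qt hQdet hQt p r hpr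
  have hZQiblk : CliqueBlkDiag dims C (Zt * Qt⁻¹) :=
    fun p r hpr => myOffblockMul hZt hQiblk p r hpr
  have hSmid := mySparseMid hass (Zt * Qt⁻¹) hZQiblk
  have hEEioff : ∀ p r : Idx dims, p ≠ r → (((Emat dims C)ᵀ * Emat dims C)⁻¹) p r = 0 :=
    fun p r hpr => myOffblockInv id _ hEEdet (fun p r hpr => myEtEoff p r hpr) p r hpr
  have hKsp : Sparse Gr dims (gainCl dims C Zt Qt) := by
    have hg : gainCl dims C Zt Qt =
        ((Emat dims C)ᵀ * Emat dims C)⁻¹ * ((Emat dims C)ᵀ * (Zt * Qt⁻¹) * Emat dims C) := by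
      unfold gainCl; simp only [Matrix.mul_assoc]
    intro i j hij hadj a b
    rw [hg, Matrix.mul_apply]
    refine Finset.sum_eq_zero fun c _ => ?_
    by_cases hc : c = (⟨i, a⟩ : Idx dims)
    · rw [hc, hSmid i j hij hadj a b, mul_zero]
    · rw [hEEioff _ c (fun he => hc he.symm), zero_mul]
  have hPsp : Sparse Gr dims ((Emat dims C)ᵀ * Qt⁻¹ * Emat dims C) :=
    mySparseMid hass Qt⁻¹ hQiblk
  have hPpd : ((Emat dims C)ᵀ * Qt⁻¹ * Emat dims C).PosDef :=
    myPosDefConj hQpd.inv (Emat dims C) hEinj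
  refine ⟨hKsp, hPsp, hPpd, ?_⟩
  -- Lyapunov part
  set Em := Emat dims C with hEm
  set U : Matrix (CIdx dims C) (Idx dims) ℝ := Qt⁻¹ * Em with hU
  set T := fromBlocks U 0 0 U with hT
  set P := Emᵀ * Qt⁻¹ * Em with hP
  set K := gainCl dims C Zt Qt with hK
  set Acl := A + B * K with hAcl
  set L := tilde dims C A * Qt + tilde dims C B * Zt with hL
  have hQU : Qt * U = Em := by rw [hU, ← Matrix.mul_assoc, hQQi, Matrix.one_mul]
  have hTinj : ∀ v : (Idx dims ⊕ Idx dims) → ℝ, T *ᵥ v = 0 → v = 0 := by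
    have hUinj : ∀ w : Idx dims → ℝ, U *ᵥ w = 0 → w = 0 := by
      intro w hw
      apply hEinj
      have : Qt *ᵥ (U *ᵥ w) = 0 := by rw [hw, Matrix.mulVec_zero]
      rwa [Matrix.mulVec_mulVec, hQU] at this
    intro v hv
    rw [hT, Matrix.fromBlocks_mulVec] at hv
    simp only [Matrix.zero_mulVec, add_zero, zero_add] at hv
    have h1 : U *ᵥ (v ∘ Sum.inl) = 0 := funext fun i => congrFun hv (Sum.inl i)
    have h2 : U *ᵥ (v ∘ Sum.inr) = 0 := funext fun i => congrFun hv (Sum.inr i)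
    have h1' := hUinj _ h1
    have h2' := hUinj _ h2
    funext i
    cases i with
    | inl i => exact congrFun h1' i
    | inr i => exact congrFun h2' i
  have hN0E : N0 dims C * Em = 0 := by
    unfold N0
    rw [← hEm, Matrix.sub_mul, Matrix.one_mul, Matrix.mul_assoc, Matrix.mul_assoc, hEEc',
      Matrix.mul_one, sub_self]
  have hDgT : fromBlocks Qt 0 0 Qt * T = fromBlocks Em 0 0 Em := by
    rw [hT, Matrix.fromBlocks_multiply]
    simp only [Matrix.mul_zero, Matrix.zero_mul, add_zero, zero_add, hQU]
  have hMT : Mmat dims C * fromBlocks Em 0 0 Em = 0 := by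
    unfold Mmat
    rw [Matrix.fromBlocks_multiply]
    simp only [Matrix.mul_zero, Matrix.zero_mul, add_zero, zero_add, hN0E]
    exact Matrix.fromBlocks_zero
  have hrho : (fromBlocks Qt 0 0 Qt * Mmat dims C * fromBlocks Qt 0 0 Qt) * T = 0 := by
    rw [Matrix.mul_assoc (fromBlocks Qt 0 0 Qt * Mmat dims C), hDgT,
      Matrix.mul_assoc, hMT, Matrix.mul_zero]
  have hPhiT : Phi dims C A B Qt Zt * T = fromBlocks Em (Lᵀ * U) (L * U) Em := by
    unfold Phi
    rw [← hL, hT, Matrix.fromBlocks_multiply]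
    simp only [Matrix.mul_zero, Matrix.zero_mul, add_zero, zero_add, hQU]
  have hPU : Uᵀ * Em = P := by rw [hU, Matrix.transpose_mul, hQitr, hP, Matrix.mul_assoc]
  have hBL : Uᵀ * (L * U) = P * Acl := by
    rw [hU, hL, hP, hAcl, hK, hEm]
    exact myBlockLow hQQi hEEc' hQitr
  have hBU : Uᵀ * (Lᵀ * U) = (P * Acl)ᵀ := by
    rw [hU, hL, hP, hAcl, hK, hEm]
    exact myBlockUp hQiQ hEEc hQtr hQitr hEitr
  have hmain : Tᵀ * ((Phi dims C A B Qt Zt +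
      ρ • ((fromBlocks Qt 0 0 Qt) * Mmat dims C * (fromBlocks Qt 0 0 Qt))) * T) =
      fromBlocks P (P * Acl)ᵀ (P * Acl) P := by
    rw [Matrix.add_mul, Matrix.smul_mul, hrho, smul_zero, add_zero, hPhiT, hT,
      Matrix.fromBlocks_transpose, Matrix.transpose_zero, Matrix.fromBlocks_multiply]
    simp only [Matrix.zero_mul, add_zero, zero_add, hPU, hBL, hBU]
  have hHpd : (fromBlocks P (P * Acl)ᵀ (P * Acl) P).PosDef := by
    rw [← hmain, ← Matrix.mul_assoc]
    exact myPosDefConj h T hTinj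
  have hPdet : IsUnit P.det := hPpd.det_pos.ne'.isUnit
  have hPtr : Pᵀ = P := by rw [← myCTeq]; exact hPpd.1
  have hPiP : P⁻¹ * P = 1 := Matrix.nonsing_inv_mul _ hPdet
  have hfinal : (P - (P * Acl)ᵀ * P⁻¹ * ((P * Acl)ᵀ)ᵀ).PosDef := by
    refine mySchur22 P ((P * Acl)ᵀ) P hPpd ?_
    rw [Matrix.transpose_transpose]
    exact hHpd
  have heq : P - (P * Acl)ᵀ * P⁻¹ * ((P * Acl)ᵀ)ᵀ = -(Aclᵀ * P * Acl - P) := by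
    rw [Matrix.transpose_transpose, neg_sub]
    congr 1
    have cP : ∀ Z : Matrix (Idx dims) (Idx dims) ℝ, P⁻¹ * (P * Z) = Z := fun Z => by
      rw [← Matrix.mul_assoc, hPiP, Matrix.one_mul]
    simp only [Matrix.transpose_mul, hPtr, Matrix.mul_assoc, cP]
  rw [heq] at hfinal
  exact hfinal
end

section
/- (Theorem 1, part 2) Under Assumption 1, 𝒦_𝒮 ⊆ 𝒦_{𝒮,ext}: every gain (EᵀE)⁻¹Eᵀ Z̃ Q̃⁻¹ E with Z̃, Q̃ clique-block-diagonal, Q̃ ≻ 0, for which there exist ρ ∈ ℝ and η > 0 with Φ(Q̃,Z̃) + ρM ≻ 0 and N₀Q̃ + Q̃N₀ ⪰ ηN₀, belongs to 𝒦_{𝒮,ext} (take G̃ = G̃ᵀ = Q̃). -/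
open Matrix

/-- `Ψ(G̃, Q̃, Z̃) = [[G̃+G̃ᵀ−Q̃, (ÃG̃+B̃Z̃)ᵀ], [ÃG̃+B̃Z̃, Q̃]]`. -/
noncomputable def Psi {N q : ℕ} (dims : Fin N → ℕ) (C : Fin q → Finset (Fin N))
    (A B : Matrix (Idx dims) (Idx dims) ℝ)
    (Gt Qt Zt : Matrix (CIdx dims C) (CIdx dims C) ℝ) :
    Matrix (CIdx dims C ⊕ CIdx dims C) (CIdx dims C ⊕ CIdx dims C) ℝ :=
  fromBlocks (Gt + Gtᵀ - Qt) (tilde dims C A * Gt + tilde dims C B * Zt)ᵀ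
    (tilde dims C A * Gt + tilde dims C B * Zt) Qt

/-- Theorem 1, part 2: `𝒦_𝒮 ⊆ 𝒦_{𝒮,ext}`. -/
theorem stmt10 {N q : ℕ} (Gr : SimpleGraph (Fin N)) (dims : Fin N → ℕ)
    (C : Fin q → Finset (Fin N)) (hclq : IsCliques Gr C) (hass : Assumption1 Gr C)
    (A B : Matrix (Idx dims) (Idx dims) ℝ)
    (Zt Qt : Matrix (CIdx dims C) (CIdx dims C) ℝ)
    (hZt : CliqueBlkDiag dims C Zt) (hQt : CliqueBlkDiag dims C Qt) (hQpd : Qt.PosDef)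
    (ρ η : ℝ) (hη : 0 < η)
    (h1 : (Phi dims C A B Qt Zt + ρ • Mmat dims C).PosDef)
    (h2 : (N0 dims C * Qt + Qt * N0 dims C - η • N0 dims C).PosSemidef) :
    ∃ (Zt' Gt' Qt' : Matrix (CIdx dims C) (CIdx dims C) ℝ) (ρ' η' : ℝ),
      CliqueBlkDiag dims C Zt' ∧ CliqueBlkDiag dims C Gt' ∧ IsUnit Gt' ∧ Qt'.PosDef ∧
      0 < η' ∧
      (Psi dims C A B Gt' Qt' Zt' + ρ' • Mmat dims C).PosDef ∧
      (Gt'ᵀ * N0 dims C + N0 dims C * Gt' - η' • N0 dims C).PosSemidef ∧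
      gainCl dims C Zt Qt = gainCl dims C Zt' Gt' := by
  have hsym : Qtᵀ = Qt := hQpd.1
  refine ⟨Zt, Qt, Qt, ρ, η, hZt, hQt, ?_, hQpd, hη, ?_, ?_, rfl⟩
  · exact (Matrix.isUnit_iff_isUnit_det _).mpr hQpd.det_pos.ne'.isUnit
  · have : Psi dims C A B Qt Qt Zt = Phi dims C A B Qt Zt := by
      unfold Psi Phi
      rw [hsym]
      congr 1
      rw [add_sub_cancel_right]
    rw [this]; exact h1
  · rw [hsym]
    have : Qt * N0 dims C + N0 dims C * Qt - η • N0 dims C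
        = N0 dims C * Qt + Qt * N0 dims C - η • N0 dims C := by
      rw [add_comm]
    rw [this]; exact h2
end

section
/- (Lemma 6) Under Assumption 1, every element of 𝒦̂_{𝒮,ext} is a stabilizing distributed gain: if Z̃ and G̃ are clique-block-diagonal, Q̃ ≻ 0, and there exists ρ ∈ ℝ with Ψ(G̃,Q̃,Z̃) + ρ H̃ᵀMH̃ ≻ 0 where H̃ = blkdiag(G̃,G̃), then G̃ is invertible, K = (EᵀE)⁻¹Eᵀ Z̃ G̃⁻¹ E satisfies K ∈ 𝒮, and there exists a positive definite matrix P₀ with (A+BK)ᵀP₀(A+BK) − P₀ ≺ 0. -/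
open Matrix

/-! ### Auxiliary lemmas -/

lemma star_pi_real {ι : Type*} (w : ι → ℝ) : star w = w := funext fun i => star_trivial (w i)

lemma ring_helper {R : Type*} [Ring R] (F Ft Q Qi : R) (h1 : Q*Qi = 1) (h2 : Qi*Q = 1) :
    (F - Q) * Qi * (Ft - Q) = F*Qi*Ft - F - Ft + Q := by
  rw [sub_mul F Q Qi, h1, sub_mul, mul_sub, mul_sub, mul_assoc F Qi Q, h2, mul_one]
  simp only [one_mul]
  abel

lemma mulVec_inj_of_isUnit {n : Type*} [Fintype n] [DecidableEq n] {M : Matrix n n ℝ}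
    (h : IsUnit M) : ∀ v, M *ᵥ v = 0 → v = 0 := by
  intro v hv
  have h2 := congrArg (fun w => M⁻¹ *ᵥ w) hv
  simpa [Matrix.mulVec_mulVec, Matrix.nonsing_inv_mul M ((Matrix.isUnit_iff_isUnit_det M).mp h)]
    using h2

lemma posdef_conj {m n : Type*} [Fintype m] [Fintype n] {M : Matrix n n ℝ}
    (hM : M.PosDef) (T : Matrix n m ℝ) (hT : ∀ v, T *ᵥ v = 0 → v = 0) :
    (Tᵀ * M * T).PosDef := by
  rw [Matrix.posDef_iff_dotProduct_mulVec]
  constructor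
  · have h1 := Matrix.isHermitian_conjTranspose_mul_mul T hM.1
    rwa [conjTranspose_eq_transpose_of_trivial] at h1
  · intro x hx
    have hTx : T *ᵥ x ≠ 0 := fun hc => hx (hT x hc)
    have h2 := (Matrix.posDef_iff_dotProduct_mulVec.mp hM).2 hTx
    rw [star_pi_real] at h2 ⊢
    rwa [← Matrix.mulVec_mulVec, ← Matrix.mulVec_mulVec, Matrix.dotProduct_mulVec,
      Matrix.vecMul_transpose]

lemma posdef_blocks₁₁ {m n : Type*} [Fintype m] [Fintype n]
    {A : Matrix m m ℝ} {B : Matrix m n ℝ} {C' : Matrix n m ℝ} {D : Matrix n n ℝ}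
    (h : (fromBlocks A B C' D).PosDef) : A.PosDef := by
  rw [Matrix.posDef_iff_dotProduct_mulVec]
  constructor
  · have h1 := h.1
    rw [Matrix.isHermitian_fromBlocks_iff] at h1
    exact h1.1
  · intro x hx
    have hx' : (Sum.elim x (0 : n → ℝ)) ≠ 0 := by
      intro hc; exact hx (funext fun i => congrFun hc (Sum.inl i))
    have h2 := (Matrix.posDef_iff_dotProduct_mulVec.mp h).2 hx'
    rw [star_pi_real] at h2
    rw [star_pi_real]
    simpa [Matrix.fromBlocks_mulVec, Matrix.mulVec_zero, sumElim_dotProduct_sumElim]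
      using h2

lemma posdef_schur {m n : Type*} [Fintype m] [Fintype n] [DecidableEq n]
    {A : Matrix m m ℝ} {B : Matrix m n ℝ} {D : Matrix n n ℝ}
    (hD : D.PosDef) (h : (fromBlocks A B Bᴴ D).PosDef) : (A - B * D⁻¹ * Bᴴ).PosDef := by
  haveI := Matrix.invertibleOfIsUnitDet D (isUnit_iff_ne_zero.mpr hD.det_pos.ne')
  rw [Matrix.posDef_iff_dotProduct_mulVec]
  constructor
  · exact (Matrix.IsHermitian.fromBlocks₂₂ A B hD.1).mp h.1
  · intro x hx
    set y : n → ℝ := -((D⁻¹ * Bᴴ) *ᵥ x) with hy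
    have key := Matrix.schur_complement_eq₂₂ A B x y hD.1
    have hxy : Sum.elim x y ≠ 0 := fun hc => hx (funext fun i => congrFun hc (Sum.inl i))
    have h2 := (Matrix.posDef_iff_dotProduct_mulVec.mp h).2 hxy
    rw [star_pi_real] at h2
    rw [Matrix.dotProduct_mulVec] at h2
    rw [star_pi_real, star_pi_real, star_pi_real] at key
    rw [key] at h2
    rw [hy] at h2
    rw [add_neg_cancel] at h2
    simp only [dotProduct_zero, zero_dotProduct, Matrix.vecMul_zero, zero_add] at h2
    rw [star_pi_real, Matrix.dotProduct_mulVec]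
    exact h2

section EmatFacts
variable {N q : ℕ} {dims : Fin N → ℕ} {C : Fin q → Finset (Fin N)}

def nodeOf (p : CIdx dims C) : Idx dims := ⟨p.2.1.1, p.2.2⟩

lemma Emat_apply (p : CIdx dims C) (x : Idx dims) :
    Emat dims C p x = if nodeOf p = x then 1 else 0 := rfl

lemma EtE_eq : (Emat dims C)ᵀ * Emat dims C =
    diagonal (fun x : Idx dims => ((Finset.univ.filter fun k => x.1 ∈ C k).card : ℝ)) := by
  ext x y
  rw [Matrix.mul_apply]
  simp only [Matrix.transpose_apply, Emat_apply]
  rcases eq_or_ne x y with rfl | hxy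
  · rw [Matrix.diagonal_apply_eq]
    have hterm : ∀ p : CIdx dims C,
        (if nodeOf p = x then (1:ℝ) else 0) * (if nodeOf p = x then 1 else 0)
          = if nodeOf p = x then 1 else 0 := by
      intro p; split <;> simp
    rw [Finset.sum_congr rfl fun p _ => hterm p, Finset.sum_boole]
    congr 1
    refine Finset.card_bij' (fun p _ => p.1)
      (fun k hk => (⟨k, ⟨x.1, (Finset.mem_filter.mp hk).2⟩, x.2⟩ : CIdx dims C))
      ?_ ?_ ?_ ?_
    · intro p hp
      have hp' := (Finset.mem_filter.mp hp).2
      simp only [Finset.mem_filter, Finset.mem_univ, true_and]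
      have h1 : p.2.1.1 = x.1 := congrArg Sigma.fst hp'
      exact h1 ▸ p.2.1.2
    · intro k hk
      simp only [Finset.mem_filter, Finset.mem_univ, true_and]
      rfl
    · intro p hp
      have hp' := (Finset.mem_filter.mp hp).2
      obtain ⟨k, ⟨j, hj⟩, b⟩ := p
      have hnode : (⟨j, b⟩ : Idx dims) = x := hp'
      subst hnode
      rfl
    · intro k hk
      rfl
  · rw [Matrix.diagonal_apply_ne _ hxy]
    apply Finset.sum_eq_zero
    intro p _
    split_ifs with h1 h2 <;> simp_all

lemma EtE_isUnit (hcov : ∀ i : Fin N, ∃ k, i ∈ C k) :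
    IsUnit ((Emat dims C)ᵀ * Emat dims C) := by
  rw [EtE_eq, Matrix.isUnit_iff_isUnit_det, Matrix.det_diagonal]
  rw [isUnit_iff_ne_zero]
  apply Finset.prod_ne_zero_iff.mpr
  intro x _
  have hne : (Finset.univ.filter fun k => x.1 ∈ C k).Nonempty := by
    obtain ⟨k, hk⟩ := hcov x.1
    exact ⟨k, Finset.mem_filter.mpr ⟨Finset.mem_univ k, hk⟩⟩
  exact_mod_cast (Finset.card_pos.mpr hne).ne'

lemma cbd_mul {X Y : Matrix (CIdx dims C) (CIdx dims C) ℝ}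
    (hX : CliqueBlkDiag dims C X) (hY : CliqueBlkDiag dims C Y) :
    CliqueBlkDiag dims C (X * Y) := by
  intro p r hpr
  rw [Matrix.mul_apply]
  apply Finset.sum_eq_zero
  intro s _
  by_cases hs : p.1 = s.1
  · rw [hY s r (hs ▸ hpr), mul_zero]
  · rw [hX p s hs, zero_mul]

lemma cbd_one : CliqueBlkDiag dims C (1 : Matrix (CIdx dims C) (CIdx dims C) ℝ) := by
  intro p r h
  exact Matrix.one_apply_ne (fun he => h (congrArg Sigma.fst he))

lemma cbd_inv {Gt : Matrix (CIdx dims C) (CIdx dims C) ℝ}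
    (hG : CliqueBlkDiag dims C Gt) (hU : IsUnit Gt) : CliqueBlkDiag dims C Gt⁻¹ := by
  classical
  have hGiG : Gt⁻¹ * Gt = 1 :=
    Matrix.nonsing_inv_mul Gt ((Matrix.isUnit_iff_isUnit_det Gt).mp hU)
  let S : Submodule ℝ (Matrix (CIdx dims C) (CIdx dims C) ℝ) :=
    { carrier := {X | CliqueBlkDiag dims C X}
      add_mem' := fun {X Y} hX hY p r hh => by
        simp only [Matrix.add_apply, hX p r hh, hY p r hh, add_zero]
      zero_mem' := fun p r hh => rfl
      smul_mem' := fun c {X} hX p r hh => by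
        simp only [Matrix.smul_apply, hX p r hh, smul_zero] }
  let φ : S →ₗ[ℝ] S :=
    { toFun := fun X => ⟨Gt * X.1, cbd_mul hG X.2⟩
      map_add' := fun X Y => Subtype.ext (by simp [Matrix.mul_add])
      map_smul' := fun c X => Subtype.ext (by simp [Matrix.mul_smul]) }
  have hinj : Function.Injective φ := by
    intro X Y hXY
    apply Subtype.ext
    have h1 : Gt * X.1 = Gt * Y.1 := congrArg Subtype.val hXY
    have h2 : Gt⁻¹ * (Gt * X.1) = Gt⁻¹ * (Gt * Y.1) := by rw [h1]
    rwa [← Matrix.mul_assoc, ← Matrix.mul_assoc, hGiG, Matrix.one_mul, Matrix.one_mul] at h2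
  have hsurj := LinearMap.injective_iff_surjective.mp hinj
  obtain ⟨Y, hY⟩ := hsurj ⟨1, cbd_one⟩
  have hGY : Gt * Y.1 = 1 := congrArg Subtype.val hY
  rw [Matrix.inv_eq_right_inv hGY]
  exact Y.2

end EmatFacts

/-- The core Lyapunov argument, stated for an abstract full-column-rank `E`. -/
lemma lyap {n m : Type*} [Fintype n] [Fintype m] [DecidableEq n] [DecidableEq m]
    (E : Matrix m n ℝ) (A B : Matrix n n ℝ) (Gt Qt Zt : Matrix m m ℝ) (ρ : ℝ)
    (hEinj : ∀ v, E *ᵥ v = 0 → v = 0)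
    (hDiD : (Eᵀ*E)⁻¹ * (Eᵀ*E) = 1)
    (hGtunit : IsUnit Gt)
    (hQpd : Qt.PosDef)
    (h : (fromBlocks
        (Gt + Gtᵀ - Qt + ρ • (Gtᵀ * (1 - E * (Eᵀ*E)⁻¹ * Eᵀ) * Gt))
        ((E * A * (Eᵀ*E)⁻¹ * Eᵀ * Gt + E * B * (Eᵀ*E)⁻¹ * Eᵀ * Zt)ᵀ)
        (E * A * (Eᵀ*E)⁻¹ * Eᵀ * Gt + E * B * (Eᵀ*E)⁻¹ * Eᵀ * Zt)
        (Qt + ρ • (Gtᵀ * (1 - E * (Eᵀ*E)⁻¹ * Eᵀ) * Gt))).PosDef) :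
    ∃ P0 : Matrix n n ℝ, P0.PosDef ∧
      NegDef ((A + B * ((Eᵀ*E)⁻¹ * Eᵀ * Zt * Gt⁻¹ * E))ᵀ * P0 *
        (A + B * ((Eᵀ*E)⁻¹ * Eᵀ * Zt * Gt⁻¹ * E)) - P0) := by
  classical
  set K : Matrix n n ℝ := (Eᵀ*E)⁻¹ * Eᵀ * Zt * Gt⁻¹ * E with hK
  set Acl : Matrix n n ℝ := A + B * K with hAcl
  have hGdet := (Matrix.isUnit_iff_isUnit_det Gt).mp hGtunit
  have hGGi : Gt * Gt⁻¹ = 1 := Matrix.mul_nonsing_inv Gt hGdet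
  set S : Matrix m n ℝ := Gt⁻¹ * E with hSdef
  have hGtS : Gt * S = E := by rw [hSdef, ← Matrix.mul_assoc, hGGi, Matrix.one_mul]
  have hN0E : (1 - E * (Eᵀ*E)⁻¹ * Eᵀ) * E = 0 := by
    rw [Matrix.sub_mul, Matrix.one_mul, Matrix.mul_assoc (E * (Eᵀ*E)⁻¹) Eᵀ E,
      Matrix.mul_assoc E (Eᵀ*E)⁻¹ (Eᵀ*E), hDiD, Matrix.mul_one, sub_self]
  have hSinj : ∀ v, S *ᵥ v = 0 → v = 0 := by
    intro v hv
    apply hEinj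
    have he : E *ᵥ v = Gt *ᵥ (S *ᵥ v) := by rw [Matrix.mulVec_mulVec, hGtS]
    rw [he, hv, Matrix.mulVec_zero]
  set F : Matrix n n ℝ := Eᵀ * S with hF
  clear_value K Acl S F
  have hStE : Sᵀ * E = Fᵀ := by
    rw [hF, Matrix.transpose_mul Eᵀ S, Matrix.transpose_transpose E]
  set Qm : Matrix n n ℝ := Sᵀ * Qt * S with hQm
  clear_value Qm
  have hQmpd : Qm.PosDef := by rw [hQm]; exact posdef_conj hQpd S hSinj
  -- block identities
  have a1 : Sᵀ * Gt * S = Fᵀ := by rw [Matrix.mul_assoc, hGtS, hStE]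
  have a2 : Sᵀ * Gtᵀ * S = F := by
    have e1 : Sᵀ * Gtᵀ = Eᵀ := by rw [← Matrix.transpose_mul, hGtS]
    rw [e1, hF]
  have a3 : Sᵀ * (Gtᵀ * (1 - E * (Eᵀ*E)⁻¹ * Eᵀ) * Gt) * S = 0 := by
    have h31 : (Gtᵀ * (1 - E * (Eᵀ*E)⁻¹ * Eᵀ) * Gt) * S = 0 := by
      rw [Matrix.mul_assoc (Gtᵀ * (1 - E * (Eᵀ*E)⁻¹ * Eᵀ)) Gt S, hGtS,
        Matrix.mul_assoc Gtᵀ (1 - E * (Eᵀ*E)⁻¹ * Eᵀ) E, hN0E, Matrix.mul_zero]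
    rw [Matrix.mul_assoc, h31, Matrix.mul_zero]
  have hLS : (E * A * (Eᵀ*E)⁻¹ * Eᵀ * Gt + E * B * (Eᵀ*E)⁻¹ * Eᵀ * Zt) * S = E * Acl := by
    rw [Matrix.add_mul]
    have t1 : E * A * (Eᵀ*E)⁻¹ * Eᵀ * Gt * S = E * A := by
      rw [Matrix.mul_assoc (E * A * (Eᵀ*E)⁻¹ * Eᵀ) Gt S, hGtS,
        Matrix.mul_assoc (E * A * (Eᵀ*E)⁻¹) Eᵀ E,
        Matrix.mul_assoc (E * A) (Eᵀ*E)⁻¹ (Eᵀ*E), hDiD, Matrix.mul_one]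
    have t2 : E * B * (Eᵀ*E)⁻¹ * Eᵀ * Zt * S = E * (B * K) := by
      rw [hK, hSdef]; simp only [Matrix.mul_assoc]
    rw [t1, t2, ← Matrix.mul_add, ← hAcl]
  have h21 : Sᵀ * (E * A * (Eᵀ*E)⁻¹ * Eᵀ * Gt + E * B * (Eᵀ*E)⁻¹ * Eᵀ * Zt) * S
      = Fᵀ * Acl := by
    rw [Matrix.mul_assoc, hLS, ← Matrix.mul_assoc, hStE]
  have h12 : Sᵀ * (E * A * (Eᵀ*E)⁻¹ * Eᵀ * Gt + E * B * (Eᵀ*E)⁻¹ * Eᵀ * Zt)ᵀ * S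
      = Aclᵀ * F := by
    have e := congrArg Matrix.transpose h21
    simp only [Matrix.transpose_mul, Matrix.transpose_transpose] at e
    rw [Matrix.mul_assoc]
    exact e
  have h11 : Sᵀ * (Gt + Gtᵀ - Qt + ρ • (Gtᵀ * (1 - E * (Eᵀ*E)⁻¹ * Eᵀ) * Gt)) * S
      = Fᵀ + F - Qm := by
    rw [Matrix.mul_add Sᵀ (Gt + Gtᵀ - Qt) (ρ • (Gtᵀ * (1 - E * (Eᵀ*E)⁻¹ * Eᵀ) * Gt)),
      Matrix.add_mul, Matrix.mul_smul, Matrix.smul_mul, a3, smul_zero, add_zero,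
      Matrix.mul_sub Sᵀ (Gt + Gtᵀ) Qt, Matrix.sub_mul, Matrix.mul_add Sᵀ Gt Gtᵀ,
      Matrix.add_mul, a1, a2, ← hQm]
  have h22 : Sᵀ * (Qt + ρ • (Gtᵀ * (1 - E * (Eᵀ*E)⁻¹ * Eᵀ) * Gt)) * S = Qm := by
    rw [Matrix.mul_add Sᵀ Qt (ρ • (Gtᵀ * (1 - E * (Eᵀ*E)⁻¹ * Eᵀ) * Gt)),
      Matrix.add_mul, Matrix.mul_smul, Matrix.smul_mul, a3, smul_zero, add_zero, ← hQm]
  -- congruence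
  have hTinj : ∀ v : (n ⊕ n) → ℝ, (fromBlocks S 0 0 S) *ᵥ v = 0 → v = 0 := by
    intro v hv
    have hv' : (fromBlocks S 0 0 S) *ᵥ (Sum.elim (v ∘ Sum.inl) (v ∘ Sum.inr)) = 0 := by
      rwa [Sum.elim_comp_inl_inr]
    rw [Matrix.fromBlocks_mulVec] at hv'
    simp only [Matrix.zero_mulVec, add_zero, zero_add] at hv'
    have hb1 : S *ᵥ (v ∘ Sum.inl) = 0 := funext fun i => congrFun hv' (Sum.inl i)
    have hb2 : S *ᵥ (v ∘ Sum.inr) = 0 := funext fun i => congrFun hv' (Sum.inr i)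
    have hc1 := hSinj _ hb1
    have hc2 := hSinj _ hb2
    funext i
    cases i with
    | inl i => exact congrFun hc1 i
    | inr i => exact congrFun hc2 i
  have hconj := posdef_conj h (fromBlocks S 0 0 S) hTinj
  have hTt : (fromBlocks S (0 : Matrix m n ℝ) (0 : Matrix m n ℝ) S)ᵀ
      = fromBlocks Sᵀ 0 0 Sᵀ := by
    rw [Matrix.fromBlocks_transpose, Matrix.transpose_zero]
  rw [hTt, Matrix.fromBlocks_multiply, Matrix.fromBlocks_multiply] at hconj
  simp only [Matrix.mul_zero, Matrix.zero_mul, add_zero, zero_add] at hconj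
  rw [h11, h12, h21, h22] at hconj
  -- now hconj : (fromBlocks (Fᵀ + F - Qm) (Aclᵀ * F) (Fᵀ * Acl) Qm).PosDef
  have hTLpd := posdef_blocks₁₁ hconj
  have hFFt : (Fᵀ + F).PosDef := by
    have h2 := hTLpd.add hQmpd
    have e : Fᵀ + F - Qm + Qm = Fᵀ + F := by abel
    rwa [e] at h2
  have hFdet : F.det ≠ 0 := by
    intro hdet
    obtain ⟨v, hv0, hFv⟩ := (Matrix.exists_mulVec_eq_zero_iff).mpr hdet
    have hq := (Matrix.posDef_iff_dotProduct_mulVec.mp hFFt).2 hv0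
    rw [star_pi_real, Matrix.add_mulVec, hFv, add_zero, Matrix.dotProduct_mulVec,
      Matrix.vecMul_transpose, hFv, zero_dotProduct] at hq
    exact lt_irrefl 0 hq
  have hFtunit : IsUnit Fᵀ := by
    rw [Matrix.isUnit_iff_isUnit_det, Matrix.det_transpose]
    exact isUnit_iff_ne_zero.mpr hFdet
  have hQmdet := (Matrix.isUnit_iff_isUnit_det Qm).mp hQmpd.isUnit
  have hQiQ : Qm⁻¹ * Qm = 1 := Matrix.nonsing_inv_mul _ hQmdet
  have hQQi : Qm * Qm⁻¹ = 1 := Matrix.mul_nonsing_inv _ hQmdet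
  have hQsym : Qmᵀ = Qm := by
    rw [← Matrix.conjTranspose_eq_transpose_of_trivial]
    exact hQmpd.1
  have hherm : (Aclᵀ * F)ᴴ = Fᵀ * Acl := by
    rw [Matrix.conjTranspose_eq_transpose_of_trivial, Matrix.transpose_mul,
      Matrix.transpose_transpose]
  have hΘ' : (fromBlocks (Fᵀ + F - Qm) (Aclᵀ * F) ((Aclᵀ * F)ᴴ) Qm).PosDef := by
    rw [hherm]; exact hconj
  have hschur := posdef_schur hQmpd hΘ'
  rw [hherm] at hschur
  -- hschur : (Fᵀ + F - Qm - Aclᵀ * F * Qm⁻¹ * (Fᵀ * Acl)).PosDef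
  refine ⟨F * Qm⁻¹ * Fᵀ, ?_, ?_⟩
  · have hc := posdef_conj (hQmpd.inv) Fᵀ (mulVec_inj_of_isUnit hFtunit)
    rwa [Matrix.transpose_transpose] at hc
  · unfold NegDef
    rw [neg_sub]
    have hpsd : ((F - Qm) * Qm⁻¹ * (F - Qm)ᵀ).PosSemidef := by
      have hp := (hQmpd.inv.posSemidef).mul_mul_conjTranspose_same (F - Qm)
      rwa [Matrix.conjTranspose_eq_transpose_of_trivial] at hp
    have hkey : F * Qm⁻¹ * Fᵀ - Aclᵀ * (F * Qm⁻¹ * Fᵀ) * Acl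
        = (Fᵀ + F - Qm - Aclᵀ * F * Qm⁻¹ * (Fᵀ * Acl)) + ((F - Qm) * Qm⁻¹ * (F - Qm)ᵀ) := by
      rw [Matrix.transpose_sub, hQsym, ring_helper F Fᵀ Qm Qm⁻¹ hQQi hQiQ]
      have hX : Aclᵀ * (F * Qm⁻¹ * Fᵀ) * Acl = Aclᵀ * F * Qm⁻¹ * (Fᵀ * Acl) := by
        simp only [Matrix.mul_assoc]
      rw [hX]
      abel
    rw [hkey]
    exact hschur.add_posSemidef hpsd

/-- Lemma 6: every element of `𝒦̂_{𝒮,ext}` is a stabilizing distributed gain. -/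
theorem stmt12 {N q : ℕ} (Gr : SimpleGraph (Fin N)) (dims : Fin N → ℕ)
    (C : Fin q → Finset (Fin N)) (hclq : IsCliques Gr C) (hass : Assumption1 Gr C)
    (A B : Matrix (Idx dims) (Idx dims) ℝ)
    (Zt Gt Qt : Matrix (CIdx dims C) (CIdx dims C) ℝ)
    (hZt : CliqueBlkDiag dims C Zt) (hGt : CliqueBlkDiag dims C Gt) (hQpd : Qt.PosDef)
    (ρ : ℝ)
    (h : (Psi dims C A B Gt Qt Zt +
        ρ • ((fromBlocks Gt 0 0 Gt)ᵀ * Mmat dims C * (fromBlocks Gt 0 0 Gt))).PosDef) :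
    IsUnit Gt ∧ Sparse Gr dims (gainCl dims C Zt Gt) ∧
    ∃ P0 : Matrix (Idx dims) (Idx dims) ℝ, P0.PosDef ∧
      NegDef ((A + B * gainCl dims C Zt Gt)ᵀ * P0 * (A + B * gainCl dims C Zt Gt) - P0) := by
  classical
  obtain ⟨hcov, hiff⟩ := hass
  have hDunit : IsUnit ((Emat dims C)ᵀ * Emat dims C) := EtE_isUnit hcov
  have hDdet := (Matrix.isUnit_iff_isUnit_det _).mp hDunit
  have hDiD : ((Emat dims C)ᵀ * Emat dims C)⁻¹ * ((Emat dims C)ᵀ * Emat dims C) = 1 :=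
    Matrix.nonsing_inv_mul _ hDdet
  have hEinj : ∀ v, Emat dims C *ᵥ v = 0 → v = 0 := by
    intro v hv
    have h1 : ((Emat dims C)ᵀ * Emat dims C) *ᵥ v = 0 := by
      rw [← Matrix.mulVec_mulVec, hv, Matrix.mulVec_zero]
    have h2 := congrArg (fun w => ((Emat dims C)ᵀ * Emat dims C)⁻¹ *ᵥ w) h1
    simpa [Matrix.mulVec_mulVec, hDiD] using h2
  have hΦ : Psi dims C A B Gt Qt Zt +
      ρ • ((fromBlocks Gt 0 0 Gt)ᵀ * Mmat dims C * (fromBlocks Gt 0 0 Gt))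
      = fromBlocks
        (Gt + Gtᵀ - Qt + ρ • (Gtᵀ * N0 dims C * Gt))
        ((tilde dims C A * Gt + tilde dims C B * Zt)ᵀ)
        (tilde dims C A * Gt + tilde dims C B * Zt)
        (Qt + ρ • (Gtᵀ * N0 dims C * Gt)) := by
    rw [Psi, Mmat, Matrix.fromBlocks_transpose, Matrix.transpose_zero,
      Matrix.fromBlocks_multiply, Matrix.fromBlocks_multiply]
    simp only [Matrix.mul_zero, Matrix.zero_mul, add_zero, zero_add]
    rw [Matrix.fromBlocks_smul, Matrix.fromBlocks_add]
    rw [smul_zero, add_zero, add_zero]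
  rw [hΦ] at h
  -- Part 1: Gt is invertible
  have hGtunit : IsUnit Gt := by
    rw [Matrix.isUnit_iff_isUnit_det, isUnit_iff_ne_zero]
    intro hdet
    obtain ⟨v, hv0, hGv⟩ := Matrix.exists_mulVec_eq_zero_iff.mpr hdet
    have hq := (Matrix.posDef_iff_dotProduct_mulVec.mp h).2 (x := Sum.elim v 0)
      (fun hc => hv0 (funext fun i => congrFun hc (Sum.inl i)))
    rw [star_pi_real, Matrix.fromBlocks_mulVec] at hq
    simp only [Sum.elim_comp_inl, Sum.elim_comp_inr, Matrix.mulVec_zero, add_zero] at hq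
    rw [sumElim_dotProduct_sumElim, zero_dotProduct, add_zero] at hq
    have hXv : (ρ • (Gtᵀ * N0 dims C * Gt)) *ᵥ v = 0 := by
      rw [Matrix.smul_mulVec, ← Matrix.mulVec_mulVec, hGv, Matrix.mulVec_zero, smul_zero]
    rw [Matrix.add_mulVec, Matrix.sub_mulVec, Matrix.add_mulVec, hGv, hXv, zero_add,
      add_zero, dotProduct_sub, Matrix.dotProduct_mulVec v Gtᵀ v,
      Matrix.vecMul_transpose, hGv, zero_dotProduct, zero_sub] at hq
    have hqpos := (Matrix.posDef_iff_dotProduct_mulVec.mp hQpd).2 hv0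
    rw [star_pi_real] at hqpos
    linarith
  refine ⟨hGtunit, ?_, ?_⟩
  · -- Part 2: sparsity
    have hGinv := cbd_inv hGt hGtunit
    have hW : CliqueBlkDiag dims C (Zt * Gt⁻¹) := cbd_mul hZt hGinv
    intro i j hij hnadj a b
    have hnoclique : ¬ ∃ k, i ∈ C k ∧ j ∈ C k := fun ⟨k, hk1, hk2⟩ =>
      hnadj ((hiff i j hij).mp ⟨k, hk1, hk2⟩)
    have hassoc : gainCl dims C Zt Gt
        = ((Emat dims C)ᵀ * Emat dims C)⁻¹ *
          ((Emat dims C)ᵀ * (Zt * Gt⁻¹) * Emat dims C) := by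
      rw [gainCl]; simp only [Matrix.mul_assoc]
    rw [hassoc, EtE_eq, Matrix.inv_diagonal, Matrix.diagonal_mul]
    apply mul_eq_zero_of_right
    rw [Matrix.mul_apply]
    apply Finset.sum_eq_zero
    intro r _
    by_cases hr : nodeOf r = (⟨j, b⟩ : Idx dims)
    · apply mul_eq_zero_of_left
      rw [Matrix.mul_apply]
      apply Finset.sum_eq_zero
      intro p _
      by_cases hp : nodeOf p = (⟨i, a⟩ : Idx dims)
      · by_cases hpr : p.1 = r.1
        · exfalso
          apply hnoclique
          have h1 : p.2.1.1 = i := congrArg Sigma.fst hp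
          have h2 : r.2.1.1 = j := congrArg Sigma.fst hr
          refine ⟨r.1, ?_, ?_⟩
          · rw [← h1, ← hpr]; exact p.2.1.2
          · rw [← h2]; exact r.2.1.2
        · rw [hW p r hpr, mul_zero]
      · rw [Matrix.transpose_apply, Emat_apply, if_neg hp, zero_mul]
    · rw [Emat_apply, if_neg hr, mul_zero]
  · -- Part 3: Lyapunov
    simp only [N0, tilde] at h
    have hmain := lyap (Emat dims C) A B Gt Qt Zt ρ hEinj hDiD hGtunit hQpd h
    simpa only [gainCl] using hmain
end

section
/- (Lemma 7, second inclusion) Every element of 𝒦_ext^{∞,γ} belongs to 𝒦_all^{∞,γ}: if Z ∈ 𝒮, Q ≻ 0, and G = blkdiag(G_1,…,G_N) is invertible and satisfies the 𝒦_ext^{∞,γ} LMI, then K = ZG⁻¹ satisfies K ∈ 𝒮 and there exists P ≻ 0 such that [[−P⁻¹, A+BK, B_v, 0], [(A+BK)ᵀ, −P, 0, (C+DK)ᵀ], [B_vᵀ, 0, −γI_{m_v}, D_wᵀ], [0, C+DK, D_w, −γI_l]] ≺ 0. -/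
open Matrix

/-- The `𝒦_ext^{∞,γ}` LMI matrix. -/
noncomputable def ExtInfLMI {N mv l : ℕ} (dims : Fin N → ℕ)
    (A B : Matrix (Idx dims) (Idx dims) ℝ) (Bv : Matrix (Idx dims) (Fin mv) ℝ)
    (Cm Dm : Matrix (Fin l) (Idx dims) ℝ) (Dw : Matrix (Fin l) (Fin mv) ℝ) (γ : ℝ)
    (Z Qm Gm : Matrix (Idx dims) (Idx dims) ℝ) :
    Matrix ((Idx dims ⊕ Idx dims) ⊕ (Fin mv ⊕ Fin l))
      ((Idx dims ⊕ Idx dims) ⊕ (Fin mv ⊕ Fin l)) ℝ :=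
  fromBlocks
    (fromBlocks (-Qm) (A * Gm + B * Z) (A * Gm + B * Z)ᵀ (Qm - Gm - Gmᵀ))
    (fromBlocks Bv 0 0 (Cm * Gm + Dm * Z)ᵀ)
    (fromBlocks Bvᵀ 0 0 (Cm * Gm + Dm * Z))
    (fromBlocks (-(γ • (1 : Matrix (Fin mv) (Fin mv) ℝ))) Dwᵀ Dw
      (-(γ • (1 : Matrix (Fin l) (Fin l) ℝ))))

/-- The closed-loop bounded-real LMI matrix
`[[−P⁻¹, A+BK, B_v, 0], [(A+BK)ᵀ, −P, 0, (C+DK)ᵀ], [B_vᵀ, 0, −γI, D_wᵀ], [0, C+DK, D_w, −γI]]`. -/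
noncomputable def BRLclosed {N mv l : ℕ} (dims : Fin N → ℕ)
    (A B : Matrix (Idx dims) (Idx dims) ℝ) (Bv : Matrix (Idx dims) (Fin mv) ℝ)
    (Cm Dm : Matrix (Fin l) (Idx dims) ℝ) (Dw : Matrix (Fin l) (Fin mv) ℝ) (γ : ℝ)
    (K P : Matrix (Idx dims) (Idx dims) ℝ) :
    Matrix ((Idx dims ⊕ Idx dims) ⊕ (Fin mv ⊕ Fin l))
      ((Idx dims ⊕ Idx dims) ⊕ (Fin mv ⊕ Fin l)) ℝ :=
  fromBlocks
    (fromBlocks (-(P⁻¹)) (A + B * K) (A + B * K)ᵀ (-P))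
    (fromBlocks Bv 0 0 (Cm + Dm * K)ᵀ)
    (fromBlocks Bvᵀ 0 0 (Cm + Dm * K))
    (fromBlocks (-(γ • (1 : Matrix (Fin mv) (Fin mv) ℝ))) Dwᵀ Dw
      (-(γ • (1 : Matrix (Fin l) (Fin l) ℝ))))

/-- Congruence preserves positive definiteness (real case, injective `T`). -/
lemma aux_posDef_conj {n m : Type*} [Fintype n] [Fintype m]
    {M : Matrix n n ℝ} (hM : M.PosDef) (T : Matrix n m ℝ)
    (hinj : Function.Injective T.mulVec) : (Tᵀ * M * T).PosDef := by
  have h : (Tᴴ * M * T).PosDef := by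
    refine Matrix.PosDef.of_dotProduct_mulVec_pos (Matrix.isHermitian_conjTranspose_mul_mul T hM.1) fun x hx => ?_
    have hx' : T *ᵥ x ≠ 0 := fun h =>
      hx (hinj (by rw [h, Matrix.mulVec_zero]))
    simpa only [star_mulVec, dotProduct_mulVec, vecMul_vecMul] using hM.dotProduct_mulVec_pos hx'
  simpa only [Matrix.conjTranspose_eq_transpose_of_trivial] using h

/-- A block-diagonal matrix with PSD diagonal blocks is PSD. -/
lemma aux_psd_fromBlocks {a b : Type*} [Fintype a] [Fintype b]
    {A : Matrix a a ℝ} {D : Matrix b b ℝ} (hA : A.PosSemidef) (hD : D.PosSemidef) :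
    (Matrix.fromBlocks A 0 0 D).PosSemidef := by
  have hA' : Aᵀ = A := by
    have h := hA.1.eq; rwa [Matrix.conjTranspose_eq_transpose_of_trivial] at h
  have hD' : Dᵀ = D := by
    have h := hD.1.eq; rwa [Matrix.conjTranspose_eq_transpose_of_trivial] at h
  rw [Matrix.posSemidef_iff_dotProduct_mulVec]
  constructor
  · show _ = _
    rw [Matrix.fromBlocks_conjTranspose]
    simp [hA', hD']
  · intro x
    have hx : x = Sum.elim (x ∘ Sum.inl) (x ∘ Sum.inr) := (Sum.elim_comp_inl_inr x).symm
    have h1 := hA.dotProduct_mulVec_nonneg (x ∘ Sum.inl)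
    have h2 := hD.dotProduct_mulVec_nonneg (x ∘ Sum.inr)
    simp only [star_trivial] at h1 h2
    calc (0:ℝ) ≤ (x ∘ Sum.inl) ⬝ᵥ A *ᵥ (x ∘ Sum.inl) + (x ∘ Sum.inr) ⬝ᵥ D *ᵥ (x ∘ Sum.inr) :=
          add_nonneg h1 h2
      _ = star x ⬝ᵥ (Matrix.fromBlocks A 0 0 D *ᵥ x) := by
          conv_rhs => rw [hx]
          simp only [star_trivial, Matrix.fromBlocks_mulVec, Matrix.dotProduct_block,
            Sum.elim_comp_inl, Sum.elim_comp_inr, Matrix.zero_mulVec, add_zero, zero_add]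

/-- Lemma 7, second inclusion: `𝒦_ext^{∞,γ} ⊆ 𝒦_all^{∞,γ}`. -/
theorem stmt16 {N mv l : ℕ} (Gr : SimpleGraph (Fin N)) (dims : Fin N → ℕ)
    (A B : Matrix (Idx dims) (Idx dims) ℝ) (Bv : Matrix (Idx dims) (Fin mv) ℝ)
    (Cm Dm : Matrix (Fin l) (Idx dims) ℝ) (Dw : Matrix (Fin l) (Fin mv) ℝ)
    (γ : ℝ) (hγ : 0 < γ)
    (Z Qm Gm : Matrix (Idx dims) (Idx dims) ℝ)
    (hZ : Sparse Gr dims Z) (hQpd : Qm.PosDef) (hGbd : BlkDiag dims Gm) (hGu : IsUnit Gm)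
    (hLMI : NegDef (ExtInfLMI dims A B Bv Cm Dm Dw γ Z Qm Gm)) :
    Sparse Gr dims (Z * Gm⁻¹) ∧
      ∃ P : Matrix (Idx dims) (Idx dims) ℝ, P.PosDef ∧
        NegDef (BRLclosed dims A B Bv Cm Dm Dw γ (Z * Gm⁻¹) P) := by
  classical
  have hGdet : IsUnit Gm.det := (Matrix.isUnit_iff_isUnit_det Gm).mp hGu
  have hGG : Gm * Gm⁻¹ = 1 := Matrix.mul_nonsing_inv Gm hGdet
  have hGiG : Gm⁻¹ * Gm = 1 := Matrix.nonsing_inv_mul Gm hGdet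
  -- `Gm⁻¹` is block diagonal
  have hHbd : BlkDiag dims Gm⁻¹ := by
    have hright : Gm * (Matrix.of fun p r : Idx dims =>
        if p.1 = r.1 then Gm⁻¹ p r else 0) = 1 := by
      ext p r
      obtain ⟨i, a⟩ := p; obtain ⟨j, b⟩ := r
      by_cases hij : i = j
      · subst hij
        have h1 := congrFun (congrFun hGG ⟨i, a⟩) ⟨i, b⟩
        rw [Matrix.mul_apply] at h1 ⊢
        rw [← h1]
        refine Finset.sum_congr rfl fun k _ => ?_
        obtain ⟨k1, c⟩ := k
        by_cases hk : k1 = i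
        · subst hk; simp
        · rw [hGbd ⟨i, a⟩ ⟨k1, c⟩ (fun h => hk h.symm), zero_mul, zero_mul]
      · rw [Matrix.mul_apply,
          Matrix.one_apply_ne (fun h => hij (congrArg Sigma.fst h))]
        refine Finset.sum_eq_zero fun k _ => ?_
        obtain ⟨k1, c⟩ := k
        by_cases hk : k1 = j
        · rw [hGbd ⟨i, a⟩ ⟨k1, c⟩ (by simpa [hk] using hij), zero_mul]
        · simp [hk]
    have hGinv : Gm⁻¹ = Matrix.of fun p r : Idx dims =>
        if p.1 = r.1 then Gm⁻¹ p r else 0 := Matrix.inv_eq_right_inv hright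
    intro p r h
    rw [hGinv]
    simp [h]
  -- sparsity of `Z * Gm⁻¹`
  have hsparse : Sparse Gr dims (Z * Gm⁻¹) := by
    intro i j hij hadj a b
    rw [Matrix.mul_apply]
    refine Finset.sum_eq_zero fun k _ => ?_
    obtain ⟨k1, c⟩ := k
    by_cases hk : k1 = j
    · subst hk
      rw [hZ i k1 hij hadj a c, zero_mul]
    · rw [hHbd ⟨k1, c⟩ ⟨j, b⟩ hk, mul_zero]
  -- algebraic preliminaries
  have hQdet : IsUnit Qm.det := (Matrix.isUnit_iff_isUnit_det Qm).mp hQpd.isUnit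
  have hQQi : Qm * Qm⁻¹ = 1 := Matrix.mul_nonsing_inv Qm hQdet
  have hQiQ : Qm⁻¹ * Qm = 1 := Matrix.nonsing_inv_mul Qm hQdet
  have hQT : Qmᵀ = Qm := by
    have h := hQpd.isHermitian.eq
    rwa [Matrix.conjTranspose_eq_transpose_of_trivial] at h
  have hPinv : (Qm⁻¹)⁻¹ = Qm := Matrix.nonsing_inv_nonsing_inv Qm hQdet
  have hS : (Gm - Qm)ᵀ * Qm⁻¹ * (Gm - Qm) = Gmᵀ * Qm⁻¹ * Gm - Gmᵀ - Gm + Qm := by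
    rw [Matrix.transpose_sub, hQT, sub_mul Gmᵀ Qm Qm⁻¹, hQQi,
      sub_mul, mul_sub, mul_sub, mul_assoc Gmᵀ Qm⁻¹ Qm, hQiQ, mul_one]
    simp only [one_mul]
    abel
  have hK1 : (A * Gm + B * Z) * Gm⁻¹ = A + B * (Z * Gm⁻¹) := by
    rw [add_mul, mul_assoc, mul_assoc, hGG, mul_one]
  have hK2 : (Cm * Gm + Dm * Z) * Gm⁻¹ = Cm + Dm * (Z * Gm⁻¹) := by
    rw [Matrix.add_mul, Matrix.mul_assoc, Matrix.mul_assoc, hGG, Matrix.mul_one]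
  have hK1t : Gm⁻¹ᵀ * (A * Gm + B * Z)ᵀ = (A + B * (Z * Gm⁻¹))ᵀ := by
    rw [← Matrix.transpose_mul, hK1]
  have hK2t : Gm⁻¹ᵀ * (Cm * Gm + Dm * Z)ᵀ = (Cm + Dm * (Z * Gm⁻¹))ᵀ := by
    rw [← Matrix.transpose_mul, hK2]
  have hGtG : Gm⁻¹ᵀ * Gmᵀ = 1 := by
    rw [← Matrix.transpose_mul, hGG, Matrix.transpose_one]
  have hQc : Gm⁻¹ᵀ * (Gmᵀ * Qm⁻¹ * Gm) * Gm⁻¹ = Qm⁻¹ := by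
    rw [← mul_assoc Gm⁻¹ᵀ (Gmᵀ * Qm⁻¹) Gm, ← mul_assoc Gm⁻¹ᵀ Gmᵀ Qm⁻¹, hGtG,
      one_mul, mul_assoc Qm⁻¹ Gm Gm⁻¹, hGG, mul_one]
  -- the modified LMI matrix M'
  set M' : Matrix ((Idx dims ⊕ Idx dims) ⊕ (Fin mv ⊕ Fin l))
      ((Idx dims ⊕ Idx dims) ⊕ (Fin mv ⊕ Fin l)) ℝ :=
    fromBlocks
      (fromBlocks (-Qm) (A * Gm + B * Z) (A * Gm + B * Z)ᵀ (-(Gmᵀ * Qm⁻¹ * Gm)))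
      (fromBlocks Bv 0 0 (Cm * Gm + Dm * Z)ᵀ)
      (fromBlocks Bvᵀ 0 0 (Cm * Gm + Dm * Z))
      (fromBlocks (-(γ • (1 : Matrix (Fin mv) (Fin mv) ℝ))) Dwᵀ Dw
        (-(γ • (1 : Matrix (Fin l) (Fin l) ℝ)))) with hM'
  set F : Matrix ((Idx dims ⊕ Idx dims) ⊕ (Fin mv ⊕ Fin l))
      ((Idx dims ⊕ Idx dims) ⊕ (Fin mv ⊕ Fin l)) ℝ :=
    fromBlocks
      (fromBlocks (0 : Matrix (Idx dims) (Idx dims) ℝ) 0 0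
        ((Gm - Qm)ᵀ * Qm⁻¹ * (Gm - Qm))) 0 0 0 with hF
  have h22 : Qm - Gm - Gmᵀ = -(Gmᵀ * Qm⁻¹ * Gm) + (Gm - Qm)ᵀ * Qm⁻¹ * (Gm - Qm) := by
    rw [hS]; abel
  have hMF : ExtInfLMI dims A B Bv Cm Dm Dw γ Z Qm Gm = M' + F := by
    rw [hM', hF, ExtInfLMI, Matrix.fromBlocks_add, Matrix.fromBlocks_add, h22]
    simp
  have hFpsd : F.PosSemidef := by
    rw [hF]
    refine aux_psd_fromBlocks (aux_psd_fromBlocks Matrix.PosSemidef.zero ?_)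
      Matrix.PosSemidef.zero
    have h := (hQpd.inv).posSemidef.conjTranspose_mul_mul_same (Gm - Qm)
    rwa [Matrix.conjTranspose_eq_transpose_of_trivial] at h
  have hM'neg : (-M').PosDef := by
    have h : -M' = -(ExtInfLMI dims A B Bv Cm Dm Dw γ Z Qm Gm) + F := by
      rw [hMF]; abel
    rw [h]
    exact Matrix.PosDef.add_posSemidef hLMI hFpsd
  -- congruence transform
  set T : Matrix ((Idx dims ⊕ Idx dims) ⊕ (Fin mv ⊕ Fin l))
      ((Idx dims ⊕ Idx dims) ⊕ (Fin mv ⊕ Fin l)) ℝ :=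
    fromBlocks (fromBlocks 1 0 0 Gm⁻¹) 0 0 1 with hT
  have hTinv : T * fromBlocks (fromBlocks 1 0 0 Gm) 0 0 1 = 1 := by
    rw [hT]
    simp [Matrix.fromBlocks_multiply, hGiG, Matrix.fromBlocks_one]
  have hTinv2 : fromBlocks (fromBlocks 1 0 0 Gm) 0 0 1 * T = 1 := by
    rw [hT]
    simp [Matrix.fromBlocks_multiply, hGG, Matrix.fromBlocks_one]
  have hTunit : IsUnit T := ⟨⟨T, _, hTinv, hTinv2⟩, rfl⟩
  have hTinj : Function.Injective T.mulVec := Matrix.mulVec_injective_iff_isUnit.mpr hTunit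
  have hcong : BRLclosed dims A B Bv Cm Dm Dw γ (Z * Gm⁻¹) Qm⁻¹ = Tᵀ * M' * T := by
    rw [hT, hM', BRLclosed]
    simp only [Matrix.fromBlocks_transpose, Matrix.fromBlocks_multiply, Matrix.transpose_one,
      Matrix.transpose_zero, Matrix.mul_one, Matrix.one_mul, Matrix.mul_zero, Matrix.zero_mul,
      add_zero, zero_add, neg_zero, Matrix.mul_neg, Matrix.neg_mul, hK1, hK2, hK1t, hK2t, hQc, hPinv]
  refine ⟨hsparse, Qm⁻¹, hQpd.inv, ?_⟩
  show (-(BRLclosed dims A B Bv Cm Dm Dw γ (Z * Gm⁻¹) Qm⁻¹)).PosDef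
  rw [hcong]
  have hneg : -(Tᵀ * M' * T) = Tᵀ * (-M') * T := by
    rw [Matrix.mul_neg, Matrix.neg_mul]
  rw [hneg]
  exact aux_posDef_conj hM'neg T hTinj
end
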